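/- Let (Ω, 𝔄, P) be a probability space, let (p^k)_{k≥1} be a sequence of ℝ^d-valued random variables, let 𝔉_k = σ(p^1, …, p^k), and let F be a nonempty closed subset of ℝ^d. Suppose that for every p ∈ F there exist nonnegative real sequences (χ^k(p))_k and (η^k(p))_k with Σ_k χ^k(p) < ∞ and Σ_k η^k(p) < ∞, and nonnegative 𝔉_k-measurable random variables ν^k(p), such that for all k, E[‖p^{k+1} − p‖² | 𝔉_k] ≤ (1 + χ^k(p)) ‖p^k − p‖² − ν^k(p) + η^k(p) almost surely. Then: (1) for every p ∈ F, Σ_k ν^k(p) < ∞ almost surely; (2) the sequence (p^k) is bounded almost surely; (3) there is an event Ω̃ with P[Ω̃] = 1 such that for every ω ∈ Ω̃ and every p ∈ F, the sequence (‖p^k(ω) − p‖)_k converges. -/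

import Mathlib

open MeasureTheory Filter
open scoped BigOperators

noncomputable section

lemma core_RS {Ω : Type} {m0 : MeasurableSpace Ω} (P : Measure Ω) [IsProbabilityMeasure P]
    (𝒢 : Filtration ℕ m0)
    (V : ℕ → Ω → ℝ) (c e : ℕ → ℝ) (w : ℕ → Ω → ℝ)
    (hc0 : ∀ n, 0 ≤ c n) (he0 : ∀ n, 0 ≤ e n)
    (hcs : Summable c) (hes : Summable e)
    (hV0 : ∀ n ω, 0 ≤ V n ω)
    (hVadp : ∀ n, StronglyMeasurable[𝒢 n] (V n)) (hVint : ∀ n, Integrable (V n) P)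
    (hw0 : ∀ n ω, 0 ≤ w n ω) (hwadp : ∀ n, StronglyMeasurable[𝒢 n] (w n))
    (hwint : ∀ n, Integrable (w n) P)
    (hrec : ∀ n, ∀ᵐ ω ∂P, (P[V (n+1)|𝒢 n]) ω ≤ (1 + c n) * V n ω - w n ω + e n) :
    ∀ᵐ ω ∂P, Summable (fun n => w n ω) ∧ ∃ l, Tendsto (fun n => V n ω) atTop (nhds l) := by
  -- the product of (1 + c j)
  set α : ℕ → ℝ := fun n => ∏ j ∈ Finset.range n, (1 + c j) with hα
  have hα1 : ∀ n, 1 ≤ α n := by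
    intro n
    simp only [hα]
    calc (1:ℝ) = ∏ _j ∈ Finset.range n, 1 := by simp
      _ ≤ ∏ j ∈ Finset.range n, (1 + c j) :=
        Finset.prod_le_prod (by simp) (fun j _ => by linarith [hc0 j])
  have hαpos : ∀ n, 0 < α n := fun n => lt_of_lt_of_le one_pos (hα1 n)
  have hαsucc : ∀ n, α (n+1) = α n * (1 + c n) := fun n => Finset.prod_range_succ _ n
  have hαmono : Monotone α := by
    apply monotone_nat_of_le_succ
    intro n
    rw [hαsucc n]
    nlinarith [hαpos n, hc0 n]
  set A : ℝ := Real.exp (∑' n, c n) with hA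
  have hαA : ∀ n, α n ≤ A := by
    intro n
    calc α n ≤ ∏ j ∈ Finset.range n, Real.exp (c j) := by
          apply Finset.prod_le_prod (fun j _ => by linarith [hc0 j])
          intro j _
          have := Real.add_one_le_exp (c j)
          linarith
      _ = Real.exp (∑ j ∈ Finset.range n, c j) := (Real.exp_sum _ _).symm
      _ ≤ A := Real.exp_le_exp.2 (Summable.sum_le_tsum _ (fun i _ => hc0 i) hcs)
  have hαconv : ∃ L, Tendsto α atTop (nhds L) :=
    ⟨_, tendsto_atTop_ciSup hαmono ⟨A, fun x ⟨n, hn⟩ => hn ▸ hαA n⟩⟩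
  -- weighted e
  set e' : ℕ → ℝ := fun n => e n / α (n+1) with he'
  have he'0 : ∀ n, 0 ≤ e' n := fun n => div_nonneg (he0 n) (hαpos _).le
  have he's : Summable e' :=
    Summable.of_nonneg_of_le he'0 (fun n => div_le_self (he0 n) (hα1 _)) hes
  set E₀ : ℝ := ∑' n, e' n with hE₀
  have hSe : ∀ n, ∑ j ∈ Finset.range n, e' j ≤ E₀ := fun n =>
    Summable.sum_le_tsum _ (fun i _ => he'0 i) he's
  -- the supermartingale
  set Y : ℕ → Ω → ℝ := fun n ω => ∑ j ∈ Finset.range n, w j ω / α (j+1) with hY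
  set M : ℕ → Ω → ℝ := fun n ω =>
    V n ω / α n + Y n ω - ∑ j ∈ Finset.range n, e' j + E₀ with hM
  have hY0 : ∀ n ω, 0 ≤ Y n ω := fun n ω =>
    Finset.sum_nonneg fun j _ => div_nonneg (hw0 j ω) (hαpos _).le
  have hM0 : ∀ n ω, 0 ≤ M n ω := by
    intro n ω
    have h1 : 0 ≤ V n ω / α n := div_nonneg (hV0 n ω) (hαpos _).le
    have := hSe n
    have := hY0 n ω
    simp only [hM]
    linarith
  have hYM : ∀ n ω, Y n ω ≤ M n ω := by
    intro n ω
    have h1 : 0 ≤ V n ω / α n := div_nonneg (hV0 n ω) (hαpos _).le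
    have := hSe n
    simp only [hM]
    linarith
  have hwmeas : ∀ j n, j ≤ n → StronglyMeasurable[𝒢 n] (w j) :=
    fun j n hj => (hwadp j).mono (𝒢.mono hj)
  have hMadp : ∀ n, StronglyMeasurable[𝒢 n] (M n) := by
    intro n
    simp only [hM, hY, div_eq_mul_inv]
    apply StronglyMeasurable.add _ stronglyMeasurable_const
    apply StronglyMeasurable.sub _ stronglyMeasurable_const
    apply StronglyMeasurable.add
    · exact (hVadp n).mul stronglyMeasurable_const
    · exact Finset.stronglyMeasurable_fun_sum _ fun j hj =>
        ((hwmeas j n (Finset.mem_range.1 hj).le).mul stronglyMeasurable_const)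
  have hMint : ∀ n, Integrable (M n) P := by
    intro n
    apply Integrable.add _ (integrable_const _)
    apply Integrable.sub _ (integrable_const _)
    exact ((hVint n).div_const _).add
      (integrable_finset_sum _ fun j _ => (hwint j).div_const _)
  -- supermartingale step
  have hkey : ∀ n, P[M (n+1)|𝒢 n] ≤ᵐ[P] M n := by
    intro n
    set g : Ω → ℝ := fun ω => Y (n+1) ω - ∑ j ∈ Finset.range (n+1), e' j + E₀ with hg
    have hdecomp : M (n+1) = (α (n+1))⁻¹ • V (n+1) + g := by
      funext ω
      simp only [hM, hg, Pi.add_apply, Pi.smul_apply, smul_eq_mul]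
      rw [div_eq_inv_mul]
      ring
    have hg_meas : StronglyMeasurable[𝒢 n] g := by
      simp only [hg, hY, div_eq_mul_inv]
      apply StronglyMeasurable.add _ stronglyMeasurable_const
      apply StronglyMeasurable.sub _ stronglyMeasurable_const
      exact Finset.stronglyMeasurable_fun_sum _ fun j hj =>
        ((hwmeas j n (Nat.lt_succ_iff.1 (Finset.mem_range.1 hj))).mul stronglyMeasurable_const)
    have hg_int : Integrable g P := by
      apply Integrable.add _ (integrable_const _)
      apply Integrable.sub _ (integrable_const _)
      exact integrable_finset_sum _ fun j _ => (hwint j).div_const _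
    have h1 : P[M (n+1)|𝒢 n] =ᵐ[P]
        fun ω => (α (n+1))⁻¹ * (P[V (n+1)|𝒢 n]) ω + g ω := by
      rw [hdecomp]
      refine (condExp_add ((hVint (n+1)).smul ((α (n+1))⁻¹)) hg_int (m := 𝒢 n)).trans ?_
      have h2 := condExp_smul (μ := P) (m := 𝒢 n) ((α (n+1))⁻¹) (V (n+1))
      have h3 : P[g|𝒢 n] =ᵐ[P] g :=
        (condExp_of_stronglyMeasurable (𝒢.le n) hg_meas hg_int).symm ▸ Filter.EventuallyEq.rfl
      filter_upwards [h2, h3] with ω h2ω h3ω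
      simp only [Pi.add_apply, Pi.smul_apply, smul_eq_mul] at *
      rw [h2ω, h3ω]
    filter_upwards [h1, hrec n] with ω h1ω hrecω
    rw [h1ω]
    have hineq : (α (n+1))⁻¹ * (P[V (n+1)|𝒢 n]) ω
        ≤ (α (n+1))⁻¹ * ((1 + c n) * V n ω - w n ω + e n) :=
      mul_le_mul_of_nonneg_left hrecω (inv_nonneg.2 (hαpos _).le)
    have hid : (α (n+1))⁻¹ * ((1 + c n) * V n ω - w n ω + e n) + g ω = M n ω := by
      simp only [hg, hM, hY, he', Finset.sum_range_succ]
      rw [hαsucc]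
      have h1 : α n ≠ 0 := (hαpos n).ne'
      have h2 : (1 : ℝ) + c n ≠ 0 := by nlinarith [hc0 n]
      field_simp
      ring
    linarith
  have hsuper : Supermartingale M 𝒢 P := supermartingale_nat hMadp hMint hkey
  -- L¹ bound
  set B : ℝ := ∫ ω, M 0 ω ∂P with hB
  have hBle : ∀ n, ∫ ω, M n ω ∂P ≤ B := by
    intro n
    have := hsuper.setIntegral_le (Nat.zero_le n) (MeasurableSet.univ : MeasurableSet[𝒢 0] Set.univ)
    simpa [setIntegral_univ] using this
  have hsnorm : ∀ n, eLpNorm (M n) 1 P ≤ ENNReal.ofReal B := by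
    intro n
    rw [eLpNorm_one_eq_lintegral_enorm]
    have hpt : ∀ ω, (‖M n ω‖₊ : ENNReal) = ENNReal.ofReal (M n ω) := fun ω => by
      rw [← enorm_eq_nnnorm, ← ofReal_norm, Real.norm_of_nonneg (hM0 n ω)]
    calc ∫⁻ ω, (‖M n ω‖₊ : ENNReal) ∂P = ∫⁻ ω, ENNReal.ofReal (M n ω) ∂P := by
          simp_rw [hpt]
      _ = ENNReal.ofReal (∫ ω, M n ω ∂P) :=
          (ofReal_integral_eq_lintegral_ofReal (hMint n)
            (Filter.Eventually.of_forall (hM0 n))).symm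
      _ ≤ ENNReal.ofReal B := ENNReal.ofReal_le_ofReal (hBle n)
  have hMconv : ∀ᵐ ω ∂P, ∃ l, Tendsto (fun n => M n ω) atTop (nhds l) := by
    have hbdd : ∀ n, eLpNorm ((-M) n) 1 P ≤ ((ENNReal.ofReal B).toNNReal : ENNReal) := by
      intro n
      rw [ENNReal.coe_toNNReal ENNReal.ofReal_ne_top]
      calc eLpNorm ((-M) n) 1 P = eLpNorm (M n) 1 P := by
            simp only [Pi.neg_apply]
            exact eLpNorm_neg _ _ _
        _ ≤ ENNReal.ofReal B := hsnorm n
    filter_upwards [hsuper.neg.exists_ae_tendsto_of_bdd hbdd] with ω ⟨l, hl⟩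
    exact ⟨-l, by simpa using hl.neg⟩
  -- summability of the weighted w series
  have hYint : ∀ n, Integrable (Y n) P := fun n =>
    integrable_finset_sum _ fun j _ => (hwint j).div_const _
  have hBw : ∀ n, ∫ ω, Y n ω ∂P ≤ B := fun n =>
    le_trans (integral_mono (hYint n) (hMint n) (hYM n)) (hBle n)
  have hwmeas0 : ∀ j, Measurable (fun ω => w j ω / α (j+1)) := fun j =>
    ((hwadp j).measurable.mono (𝒢.le j) le_rfl).div_const _
  have hkey2 : ∫⁻ ω, ∑' j, ENNReal.ofReal (w j ω / α (j+1)) ∂P ≤ ENNReal.ofReal B := by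
    rw [lintegral_tsum (fun j => ((hwmeas0 j).ennreal_ofReal).aemeasurable)]
    have heach : ∀ j, ∫⁻ ω, ENNReal.ofReal (w j ω / α (j+1)) ∂P
        = ENNReal.ofReal (∫ ω, w j ω / α (j+1) ∂P) := fun j =>
      (ofReal_integral_eq_lintegral_ofReal ((hwint j).div_const _)
        (Filter.Eventually.of_forall fun ω => div_nonneg (hw0 j ω) (hαpos _).le)).symm
    simp_rw [heach]
    rw [ENNReal.tsum_eq_iSup_nat]
    apply iSup_le
    intro n
    rw [← ENNReal.ofReal_sum_of_nonneg
      (fun j _ => integral_nonneg fun ω => div_nonneg (hw0 j ω) (hαpos _).le)]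
    apply ENNReal.ofReal_le_ofReal
    rw [← integral_finset_sum _ (fun j _ => (hwint j).div_const _)]
    exact hBw n
  have hWsum : ∀ᵐ ω ∂P, Summable (fun j => w j ω / α (j+1)) := by
    have hfin : ∀ᵐ ω ∂P, (∑' j, ENNReal.ofReal (w j ω / α (j+1))) < ⊤ :=
      ae_lt_top (Measurable.ennreal_tsum fun j => (hwmeas0 j).ennreal_ofReal)
        (lt_of_le_of_lt hkey2 ENNReal.ofReal_lt_top).ne
    filter_upwards [hfin] with ω hω
    have hsum := ENNReal.summable_toReal hω.ne
    have : (fun j => (ENNReal.ofReal (w j ω / α (j+1))).toReal)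
        = fun j => w j ω / α (j+1) := by
      funext j
      exact ENNReal.toReal_ofReal (div_nonneg (hw0 j ω) (hαpos _).le)
    rwa [this] at hsum
  -- combine
  filter_upwards [hMconv, hWsum] with ω hM1 hw1
  obtain ⟨l, hl⟩ := hM1
  constructor
  · refine Summable.of_nonneg_of_le (fun n => hw0 n ω) (fun n => ?_) (hw1.mul_left A)
    have h1 : w n ω / α (n+1) * α (n+1) = w n ω := div_mul_cancel₀ _ (hαpos _).ne'
    calc w n ω = w n ω / α (n+1) * α (n+1) := h1.symm
      _ ≤ w n ω / α (n+1) * A :=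
          mul_le_mul_of_nonneg_left (hαA _) (div_nonneg (hw0 n ω) (hαpos _).le)
      _ = A * (w n ω / α (n+1)) := mul_comm _ _
  · obtain ⟨L, hL⟩ := hαconv
    have hYconv : Tendsto (fun n => Y n ω) atTop (nhds (∑' j, w j ω / α (j+1))) := by
      simpa only [hY] using hw1.hasSum.tendsto_sum_nat
    have hSeconv : Tendsto (fun n => ∑ j ∈ Finset.range n, e' j) atTop (nhds E₀) :=
      he's.hasSum.tendsto_sum_nat
    have hform : (fun n => V n ω / α n)
        = fun n => M n ω - Y n ω + (∑ j ∈ Finset.range n, e' j) - E₀ := by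
      funext n
      simp only [hM]
      ring
    have hdiv : Tendsto (fun n => V n ω / α n) atTop
        (nhds (l - (∑' j, w j ω / α (j+1)) + E₀ - E₀)) := by
      rw [hform]
      exact ((hl.sub hYconv).add hSeconv).sub tendsto_const_nhds
    have heq : (fun n => V n ω) = fun n => (V n ω / α n) * α n :=
      funext fun n => (div_mul_cancel₀ _ (hαpos n).ne').symm
    exact ⟨_, by rw [heq]; exact hdiv.mul hL⟩


/-- `Ed d` is Euclidean space `ℝ^d`. -/
abbrev Ed (d : ℕ) := EuclideanSpace ℝ (Fin d)

/-- stochastic quasi-Fejér monotonicity (Combettes–Pesquet, Prop. 2.3). -/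
theorem stochastic_quasi_fejer {d : ℕ} {Ω : Type} [MeasurableSpace Ω]
    (P : Measure Ω) [IsProbabilityMeasure P]
    (p : ℕ → Ω → Ed d) (hpm : ∀ k, Measurable (p k))
    (F : ℕ → MeasurableSpace Ω)
    (hF : ∀ k, F k = ⨆ j ∈ Set.Icc 1 k, MeasurableSpace.comap (p j) inferInstance)
    (Fs : Set (Ed d)) (hFne : Fs.Nonempty) (hFc : IsClosed Fs)
    (χ η : Ed d → ℕ → ℝ) (ν : Ed d → ℕ → Ω → ℝ)
    (hχ0 : ∀ q ∈ Fs, ∀ k, 0 ≤ χ q k) (hη0 : ∀ q ∈ Fs, ∀ k, 0 ≤ η q k)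
    (hχs : ∀ q ∈ Fs, Summable (fun k : ℕ => χ q (k + 1)))
    (hηs : ∀ q ∈ Fs, Summable (fun k : ℕ => η q (k + 1)))
    (hν0 : ∀ q ∈ Fs, ∀ k ω, 0 ≤ ν q k ω)
    (hνm : ∀ q ∈ Fs, ∀ k, 1 ≤ k → Measurable[F k] (ν q k))
    (hint : ∀ q ∈ Fs, ∀ k, 1 ≤ k → Integrable (fun ω => ‖p k ω - q‖ ^ 2) P)
    (hνint : ∀ q ∈ Fs, ∀ k, 1 ≤ k → Integrable (ν q k) P)
    (hrec : ∀ q ∈ Fs, ∀ k, 1 ≤ k → ∀ᵐ ω ∂P,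
      (P[fun ω' => ‖p (k + 1) ω' - q‖ ^ 2 | F k]) ω
        ≤ (1 + χ q k) * ‖p k ω - q‖ ^ 2 - ν q k ω + η q k) :
    (∀ q ∈ Fs, ∀ᵐ ω ∂P, Summable (fun k : ℕ => ν q (k + 1) ω))
    ∧ (∀ᵐ ω ∂P, ∃ M : ℝ, ∀ k, 1 ≤ k → ‖p k ω‖ ≤ M)
    ∧ ∃ Ωt : Set Ω, P Ωt = 1 ∧ ∀ ω ∈ Ωt, ∀ q ∈ Fs,
        ∃ l : ℝ, Tendsto (fun k => ‖p k ω - q‖) atTop (nhds l) := by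
  classical
  -- the filtration
  have hFmono : ∀ {n m : ℕ}, n ≤ m → F n ≤ F m := by
    intro n m hnm
    rw [hF, hF]
    exact biSup_mono (Set.Icc_subset_Icc_right hnm)
  have hFle : ∀ n, F n ≤ ‹MeasurableSpace Ω› := by
    intro n
    rw [hF]
    exact iSup₂_le fun j _ => (hpm j).comap_le
  set 𝒢 : Filtration ℕ ‹MeasurableSpace Ω› :=
    ⟨fun n => F (n+1), fun n m h => hFmono (Nat.succ_le_succ h), fun n => hFle (n+1)⟩ with h𝒢
  have h𝒢app : ∀ n, (𝒢 n : MeasurableSpace Ω) = F (n+1) := fun n => rfl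
  have hpFmeas : ∀ k, 1 ≤ k → Measurable[F k] (p k) := by
    intro k hk
    have hc : MeasurableSpace.comap (p k) inferInstance ≤ F k := by
      rw [hF]
      exact le_iSup₂ (f := fun j (_ : j ∈ Set.Icc 1 k) => MeasurableSpace.comap (p j) inferInstance)
        k (Set.mem_Icc.mpr ⟨hk, le_rfl⟩)
    exact (measurable_iff_comap_le.mpr le_rfl).mono hc le_rfl
  -- apply the core lemma for every q in Fs
  have main : ∀ q ∈ Fs, ∀ᵐ ω ∂P, Summable (fun n : ℕ => ν q (n+1) ω)
      ∧ ∃ l, Tendsto (fun n => ‖p (n+1) ω - q‖ ^ 2) atTop (nhds l) := by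
    intro q hq
    refine core_RS P 𝒢 (fun n ω => ‖p (n+1) ω - q‖ ^ 2)
      (fun n => χ q (n+1)) (fun n => η q (n+1)) (fun n => ν q (n+1))
      (fun n => hχ0 q hq (n+1)) (fun n => hη0 q hq (n+1)) (hχs q hq) (hηs q hq)
      (fun n ω => sq_nonneg _) ?_ (fun n => hint q hq (n+1) (Nat.le_add_left 1 n))
      (fun n ω => hν0 q hq (n+1) ω) ?_ (fun n => hνint q hq (n+1) (Nat.le_add_left 1 n)) ?_
    · intro n
      have h := hpFmeas (n+1) (Nat.le_add_left 1 n)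
      have hg : Measurable fun x : Ed d => ‖x - q‖ ^ 2 :=
        ((measurable_id.sub_const q).norm).pow_const 2
      exact (hg.comp h).stronglyMeasurable
    · intro n
      exact (hνm q hq (n+1) (Nat.le_add_left 1 n)).stronglyMeasurable
    · intro n
      exact hrec q hq (n+1) (Nat.le_add_left 1 n)
  refine ⟨fun q hq => (main q hq).mono fun ω h => h.1, ?_, ?_⟩
  · -- boundedness
    obtain ⟨q₀, hq₀⟩ := hFne
    filter_upwards [main q₀ hq₀] with ω h
    obtain ⟨l, hl⟩ := h.2
    obtain ⟨C, hC⟩ := hl.bddAbove_range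
    refine ⟨Real.sqrt C + ‖q₀‖, ?_⟩
    intro k hk
    obtain ⟨n, rfl⟩ : ∃ n, k = n + 1 := ⟨k - 1, by omega⟩
    have h1 : ‖p (n+1) ω - q₀‖ ^ 2 ≤ C := hC ⟨n, rfl⟩
    have h2 : ‖p (n+1) ω - q₀‖ ≤ Real.sqrt C := by
      rw [← Real.sqrt_sq (norm_nonneg (p (n+1) ω - q₀))]
      exact Real.sqrt_le_sqrt h1
    calc ‖p (n+1) ω‖ = ‖(p (n+1) ω - q₀) + q₀‖ := by rw [sub_add_cancel]
      _ ≤ ‖p (n+1) ω - q₀‖ + ‖q₀‖ := norm_add_le _ _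
      _ ≤ Real.sqrt C + ‖q₀‖ := by linarith
  · -- the full-measure event of simultaneous convergence
    obtain ⟨D, hDF, hDc, hDd⟩ :=
      (TopologicalSpace.IsSeparable.of_separableSpace Fs).exists_countable_dense_subset
    set good : Ed d → Set Ω :=
      fun q => {ω | ∃ l, Tendsto (fun k => ‖p k ω - q‖) atTop (nhds l)} with hgood
    have hae : ∀ q ∈ Fs, ∀ᵐ ω ∂P, ω ∈ good q := by
      intro q hq
      filter_upwards [main q hq] with ω h
      obtain ⟨l, hl⟩ := h.2
      have h2 : Tendsto (fun n => ‖p (n+1) ω - q‖) atTop (nhds (Real.sqrt l)) := by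
        have h3 := hl.sqrt
        have h4 : (fun n => Real.sqrt (‖p (n+1) ω - q‖ ^ 2)) = fun n => ‖p (n+1) ω - q‖ := by
          funext n
          exact Real.sqrt_sq (norm_nonneg _)
        rwa [h4] at h3
      exact ⟨Real.sqrt l, (tendsto_add_atTop_iff_nat 1).1 h2⟩
    refine ⟨⋂ q ∈ D, good q, ?_, ?_⟩
    · have hnull : P (⋃ q ∈ D, (good q)ᶜ) = 0 := by
        rw [measure_biUnion_null_iff hDc]
        intro q hqD
        have := hae q (hDF hqD)
        rwa [MeasureTheory.ae_iff] at this
      have hcompl : (⋂ q ∈ D, good q)ᶜ = ⋃ q ∈ D, (good q)ᶜ := by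
        simp [Set.compl_iInter]
      have := measure_congr (MeasureTheory.ae_eq_univ.mpr (by rw [hcompl]; exact hnull))
      rwa [measure_univ] at this
    · intro ω hω q hq
      have hconv : ∀ q' ∈ D, ∃ l, Tendsto (fun k => ‖p k ω - q'‖) atTop (nhds l) :=
        fun q' hq' => Set.mem_iInter₂.1 hω q' hq'
      have hcauchy : CauchySeq (fun k => ‖p k ω - q‖) := by
        rw [Metric.cauchySeq_iff]
        intro ε hε
        obtain ⟨q', hq'D, hqq'⟩ : ∃ q' ∈ D, dist q q' < ε/4 :=
          Metric.mem_closure_iff.1 (hDd hq) _ (by linarith)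
        obtain ⟨l', hl'⟩ := hconv q' hq'D
        obtain ⟨N, hN⟩ := Metric.cauchySeq_iff.1 hl'.cauchySeq (ε/2) (by linarith)
        refine ⟨N, fun m hm n hn => ?_⟩
        have hb : ∀ k : ℕ, dist (‖p k ω - q‖) (‖p k ω - q'‖) ≤ dist q q' := by
          intro k
          rw [Real.dist_eq]
          have h5 := abs_norm_sub_norm_le (p k ω - q) (p k ω - q')
          have h6 : (p k ω - q) - (p k ω - q') = q' - q := by abel
          rw [h6] at h5
          rw [dist_comm, dist_eq_norm]
          exact h5
        have h8' : dist (‖p n ω - q'‖) (‖p n ω - q‖) ≤ dist q q' := by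
          rw [dist_comm]
          exact hb n
        calc dist (‖p m ω - q‖) (‖p n ω - q‖)
            ≤ dist (‖p m ω - q‖) (‖p m ω - q'‖) + dist (‖p m ω - q'‖) (‖p n ω - q'‖)
              + dist (‖p n ω - q'‖) (‖p n ω - q‖) := dist_triangle4 _ _ _ _
          _ < ε/4 + ε/2 + ε/4 := by
              have h9 := hN m hm n hn
              have h7 := hb m
              linarith
          _ = ε := by ring
      obtain ⟨l, hl⟩ := cauchySeq_tendsto_of_complete hcauchy
      exact ⟨l, hl⟩
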